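/- Equivalent form of objectivity: under the hypotheses of the two-channel objectivity theorem, ⟨Φ, (A ⊗ B) Φ⟩ = ⟨Φ, (A ⊗ 1) Φ⟩ = ⟨Φ, (1 ⊗ B) Φ⟩ = |c₁|². -/

import Mathlib

open scoped InnerProductSpace

/-- Cauchy–Schwarz for a positive operator: if the "expectation" of `T` at `y`
vanishes, then all matrix elements `⟪x, T y⟫` vanish. -/
lemma pos_inner_zero {E : Type*} [NormedAddCommGroup E] [InnerProductSpace ℂ E]
    [CompleteSpace E] {T : E →L[ℂ] E} (hT : T.IsPositive) {y : E}
    (hy : ⟪y, T y⟫_ℂ = 0) (x : E) : ⟪x, T y⟫_ℂ = 0 := by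
  have hsa : ∀ a b : E, ⟪T a, b⟫_ℂ = ⟪a, T b⟫_ℂ := fun a b =>
    hT.isSelfAdjoint.isSymmetric a b
  let c : PreInnerProductSpace.Core ℂ E :=
    { inner := fun a b => ⟪a, T b⟫_ℂ
      conj_inner_symm := fun a b => by
        show (starRingEnd ℂ) ⟪b, T a⟫_ℂ = ⟪a, T b⟫_ℂ
        rw [inner_conj_symm, hsa]
      re_inner_nonneg := fun a => by
        have := hT.inner_nonneg_right a
        exact (Complex.nonneg_iff.mp this).1
      add_left := fun a b z => inner_add_left a b (T z)
      smul_left := fun a b r => inner_smul_left a (T b) r }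
  have hcs := @InnerProductSpace.Core.inner_mul_inner_self_le ℂ E _ _ _ c x y
  have h1 : @inner ℂ E c.toInner x y = ⟪x, T y⟫_ℂ := rfl
  have h2 : @inner ℂ E c.toInner y x = ⟪y, T x⟫_ℂ := rfl
  have h3 : @inner ℂ E c.toInner y y = ⟪y, T y⟫_ℂ := rfl
  rw [h1, h2, h3, hy] at hcs
  simp only [map_zero, mul_zero] at hcs
  have hyx : ⟪y, T x⟫_ℂ = (starRingEnd ℂ) ⟪x, T y⟫_ℂ := by
    rw [← inner_conj_symm, hsa]
  rw [hyx, RCLike.norm_conj] at hcs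
  have hn : ‖⟪x, T y⟫_ℂ‖ = 0 := by nlinarith [norm_nonneg ⟪x, T y⟫_ℂ]
  exact norm_eq_zero.mp hn

/-- Eq. (93) of the paper: equivalent form of the objectivity theorem in the
two-channel pure-state model. `TAB`, `TA1`, `T1B` represent `A ⊗ B`, `A ⊗ 1`,
`1 ⊗ B` on the Hilbert tensor product `K`, characterized by their matrix
elements on elementary tensors `tp x y`. -/
theorem stmt11 {H₁ H₂ K : Type*}
    [NormedAddCommGroup H₁] [InnerProductSpace ℂ H₁] [CompleteSpace H₁]
    [NormedAddCommGroup H₂] [InnerProductSpace ℂ H₂] [CompleteSpace H₂]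
    [NormedAddCommGroup K] [InnerProductSpace ℂ K] [CompleteSpace K]
    (φ₁ φ₂ : H₁) (hφ₁ : ‖φ₁‖ = 1) (hφ₂ : ‖φ₂‖ = 1) (hφ : ⟪φ₁, φ₂⟫_ℂ = 0)
    (ψ₁ ψ₂ : H₂) (hψ₁ : ‖ψ₁‖ = 1) (hψ₂ : ‖ψ₂‖ = 1) (hψ : ⟪ψ₁, ψ₂⟫_ℂ = 0)
    (c₁ c₂ : ℂ) (hc : ‖c₁‖ ^ 2 + ‖c₂‖ ^ 2 = 1)
    (A : H₁ →L[ℂ] H₁) (hA : A.IsPositive) (hA1 : (1 - A).IsPositive)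
    (B : H₂ →L[ℂ] H₂) (hB : B.IsPositive) (hB1 : (1 - B).IsPositive)
    (hAφ₁ : ⟪φ₁, A φ₁⟫_ℂ = 1) (hAφ₂ : ⟪φ₂, A φ₂⟫_ℂ = 0)
    (hBψ₁ : ⟪ψ₁, B ψ₁⟫_ℂ = 1) (hBψ₂ : ⟪ψ₂, B ψ₂⟫_ℂ = 0)
    (tp : H₁ → H₂ → K)
    (TAB TA1 T1B : K →L[ℂ] K)
    (hTAB : ∀ (x x' : H₁) (y y' : H₂),
      ⟪tp x y, TAB (tp x' y')⟫_ℂ = ⟪x, A x'⟫_ℂ * ⟪y, B y'⟫_ℂ)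
    (hTA1 : ∀ (x x' : H₁) (y y' : H₂),
      ⟪tp x y, TA1 (tp x' y')⟫_ℂ = ⟪x, A x'⟫_ℂ * ⟪y, y'⟫_ℂ)
    (hT1B : ∀ (x x' : H₁) (y y' : H₂),
      ⟪tp x y, T1B (tp x' y')⟫_ℂ = ⟪x, x'⟫_ℂ * ⟪y, B y'⟫_ℂ)
    (Φ : K) (hΦ : Φ = c₁ • tp φ₁ ψ₁ + c₂ • tp φ₂ ψ₂) :
    ⟪Φ, TAB Φ⟫_ℂ = (‖c₁‖ ^ 2 : ℂ) ∧ ⟪Φ, TA1 Φ⟫_ℂ = (‖c₁‖ ^ 2 : ℂ) ∧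
      ⟪Φ, T1B Φ⟫_ℂ = (‖c₁‖ ^ 2 : ℂ) := by
  -- matrix elements vanishing from positivity
  have hBψ₁ψ₂ : ⟪ψ₁, B ψ₂⟫_ℂ = 0 := pos_inner_zero hB hBψ₂ ψ₁
  have hsaB : ∀ a b : H₂, ⟪B a, b⟫_ℂ = ⟪a, B b⟫_ℂ := fun a b =>
    hB.isSelfAdjoint.isSymmetric a b
  have hBψ₂ψ₁ : ⟪ψ₂, B ψ₁⟫_ℂ = 0 := by
    rw [← inner_conj_symm, hsaB ψ₁ ψ₂, hBψ₁ψ₂, map_zero]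
  have hAφ₁φ₂ : ⟪φ₁, A φ₂⟫_ℂ = 0 := pos_inner_zero hA hAφ₂ φ₁
  have hφ' : ⟪φ₂, φ₁⟫_ℂ = 0 := by rw [← inner_conj_symm, hφ, map_zero]
  have hψ' : ⟪ψ₂, ψ₁⟫_ℂ = 0 := by rw [← inner_conj_symm, hψ, map_zero]
  have hφn : ⟪φ₁, φ₁⟫_ℂ = 1 := by
    rw [inner_self_eq_norm_sq_to_K, hφ₁]; norm_num
  have hψn : ⟪ψ₁, ψ₁⟫_ℂ = 1 := by
    rw [inner_self_eq_norm_sq_to_K, hψ₁]; norm_num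
  have hc₁ : (starRingEnd ℂ) c₁ * c₁ = (‖c₁‖ ^ 2 : ℂ) := by
    rw [RCLike.conj_mul]; norm_cast
  have key : ∀ (T : K →L[ℂ] K) (a b c d : ℂ),
      ⟪tp φ₁ ψ₁, T (tp φ₁ ψ₁)⟫_ℂ = a → ⟪tp φ₁ ψ₁, T (tp φ₂ ψ₂)⟫_ℂ = b →
      ⟪tp φ₂ ψ₂, T (tp φ₁ ψ₁)⟫_ℂ = c → ⟪tp φ₂ ψ₂, T (tp φ₂ ψ₂)⟫_ℂ = d →
      a = 1 → b = 0 → c = 0 → d = 0 →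
      ⟪Φ, T Φ⟫_ℂ = (‖c₁‖ ^ 2 : ℂ) := by
    intro T a b c d h11 h12 h21 h22 ha hb hcc hd
    rw [hΦ]
    simp only [map_add, map_smul, inner_add_left, inner_add_right,
      inner_smul_left, inner_smul_right, h11, h12, h21, h22, ha, hb, hcc, hd,
      mul_zero, mul_one, add_zero, zero_add]
    rw [mul_comm, hc₁]
  refine ⟨?_, ?_, ?_⟩
  · exact key TAB _ _ _ _ (hTAB _ _ _ _) (hTAB _ _ _ _) (hTAB _ _ _ _) (hTAB _ _ _ _)
      (by rw [hAφ₁, hBψ₁, one_mul]) (by rw [hBψ₁ψ₂, mul_zero])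
      (by rw [hBψ₂ψ₁, mul_zero]) (by rw [hAφ₂, zero_mul])
  · exact key TA1 _ _ _ _ (hTA1 _ _ _ _) (hTA1 _ _ _ _) (hTA1 _ _ _ _) (hTA1 _ _ _ _)
      (by rw [hAφ₁, hψn, one_mul]) (by rw [hψ, mul_zero])
      (by rw [hψ', mul_zero]) (by rw [hAφ₂, zero_mul])
  · exact key T1B _ _ _ _ (hT1B _ _ _ _) (hT1B _ _ _ _) (hT1B _ _ _ _) (hT1B _ _ _ _)
      (by rw [hφn, hBψ₁, one_mul]) (by rw [hφ, zero_mul])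
      (by rw [hφ', zero_mul]) (by rw [hBψ₂, mul_zero])
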